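/- For λ > −1 and ξ > 0, ∫₀^∞ e^{−2ξ/r} r^{−(λ+2)} dr = Γ(λ+1)/(2ξ)^{λ+1}. Consequently, the map V_λ sending ψ ∈ L²(ℂⁿ × ℝ₊, η) (where dη(w',ξ) = (2ξ/π)ⁿ e^{−2ξ|w'|²} dw' dξ) to the function (w',ξ,r) ↦ 2·√(π(2ξ)^{λ+n+1}/Γ(λ+n+2)) · e^{−ξ|w'|²} e^{−ξ/r} ψ(w',ξ) is an isometry into L²(ℂⁿ × ℝ × ℝ₊, ν_λ), where dν_λ(w',ξ,r) = (c_λ/(4 r^{λ+2})) dw' dξ dr and c_λ = Γ(λ+n+2)/(π^{n+1}Γ(λ+1)). -/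

import Mathlib

open MeasureTheory

section Aux

lemma aux_int (l : ℝ) (hl : -1 < l) {ξ : ℝ} (hξ : 0 < ξ) :
    IntegrableOn (fun r => Real.exp (-2 * ξ / r) * r ^ (-(l + 2))) (Set.Ioi 0) ∧
    ∫ r in Set.Ioi (0:ℝ), Real.exp (-2 * ξ / r) * r ^ (-(l + 2)) =
      Real.Gamma (l + 1) / (2 * ξ) ^ (l + 1) := by
  set g : ℝ → ℝ := fun y => y ^ l * Real.exp (-(2 * ξ * y)) with hg
  have hgi : IntegrableOn g (Set.Ioi 0) := by
    have := integrableOn_rpow_mul_exp_neg_mul_rpow hl zero_lt_one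
      (by positivity : (0:ℝ) < 2 * ξ)
    refine this.congr_fun (fun x hx => ?_) measurableSet_Ioi
    simp only [hg, Real.rpow_one]
    ring_nf
  have key : ∀ x : ℝ, x ∈ Set.Ioi (0:ℝ) →
      (|(-1:ℝ)| * x ^ ((-1:ℝ) - 1)) • g (x ^ (-1:ℝ)) =
        Real.exp (-2 * ξ / x) * x ^ (-(l + 2)) := by
    intro x hx
    have hx0 : (0:ℝ) < x := hx
    rw [Real.rpow_neg_one, abs_neg, abs_one, one_mul, smul_eq_mul, hg]
    simp only []
    rw [Real.inv_rpow hx0.le, ← Real.rpow_neg hx0.le]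
    have e2 : x ^ ((-1:ℝ)-1) * x ^ (-l) = x ^ (-(l+2)) := by
      rw [← Real.rpow_add hx0]; norm_num
    rw [← mul_assoc, e2, mul_comm]
    congr 1
    ring
  have heq := integral_comp_rpow_Ioi g (by norm_num : (-1:ℝ) ≠ 0)
  have hint : IntegrableOn (fun r => Real.exp (-2 * ξ / r) * r ^ (-(l + 2))) (Set.Ioi 0) := by
    have := (integrableOn_Ioi_comp_rpow_iff g (by norm_num : (-1:ℝ) ≠ 0)).mpr hgi
    exact this.congr_fun key measurableSet_Ioi
  refine ⟨hint, ?_⟩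
  have h1 : ∫ x in Set.Ioi (0:ℝ), Real.exp (-2 * ξ / x) * x ^ (-(l + 2)) =
      ∫ y in Set.Ioi (0:ℝ), g y := by
    rw [← heq]
    exact (setIntegral_congr_fun measurableSet_Ioi key).symm
  rw [h1]
  have h2 : ∫ y in Set.Ioi (0:ℝ), g y = (1 / (2*ξ)) ^ (l+1) * Real.Gamma (l+1) := by
    rw [← Real.integral_rpow_mul_exp_neg_mul_Ioi (by linarith : (0:ℝ) < l + 1)
      (by positivity : (0:ℝ) < 2*ξ)]
    congr 1; ext y; rw [hg]; ring_nf
  rw [h2, Real.div_rpow (by norm_num) (by positivity), Real.one_rpow]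
  ring

lemma aux_lint (l : ℝ) (hl : -1 < l) {ξ : ℝ} (hξ : 0 < ξ) :
    ∫⁻ r in Set.Ioi (0:ℝ), ENNReal.ofReal (Real.exp (-2 * ξ / r) * r ^ (-(l + 2))) =
      ENNReal.ofReal (Real.Gamma (l + 1) / (2 * ξ) ^ (l + 1)) := by
  rw [← ofReal_integral_eq_lintegral_ofReal (aux_int l hl hξ).1, (aux_int l hl hξ).2]
  filter_upwards [ae_restrict_mem measurableSet_Ioi] with r hr
  have hr0 : (0:ℝ) < r := hr
  positivity

end Aux

/-- The normalization constant `c_λ = Γ(λ+n+2)/(π^{n+1} Γ(λ+1))`. -/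
noncomputable def clam (n : ℕ) (l : ℝ) : ℝ :=
  Real.Gamma (l + n + 2) / (Real.pi ^ (n + 1) * Real.Gamma (l + 1))

/-- The measure `dη(w',ξ) = (2ξ/π)ⁿ e^{−2ξ|w'|²} dw' dξ` on `ℂⁿ × ℝ₊`. -/
noncomputable def etaMeas (n : ℕ) : Measure ((Fin n → ℂ) × ℝ) :=
  (volume.restrict {q : (Fin n → ℂ) × ℝ | 0 < q.2}).withDensity fun q =>
    ENNReal.ofReal ((2 * q.2 / Real.pi) ^ n
      * Real.exp (-2 * q.2 * ∑ j, Complex.normSq (q.1 j)))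

/-- The measure `dν_λ(w',ξ,r) = (c_λ/(4 r^{λ+2})) dw' dξ dr` on `ℂⁿ × ℝ × ℝ₊`. -/
noncomputable def nulam (n : ℕ) (l : ℝ) : Measure ((Fin n → ℂ) × ℝ × ℝ) :=
  (volume.restrict {p : (Fin n → ℂ) × ℝ × ℝ | 0 < p.2.2}).withDensity fun p =>
    ENNReal.ofReal (clam n l / (4 * p.2.2 ^ (l + 2)))

/-- The renormalization operator `V_λ`. -/
noncomputable def Vlam (n : ℕ) (l : ℝ) (ψ : (Fin n → ℂ) × ℝ → ℂ)
    (p : (Fin n → ℂ) × ℝ × ℝ) : ℂ :=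
  if 0 < p.2.1 then
    ((2 * Real.sqrt (Real.pi * (2 * p.2.1) ^ (l + n + 1) / Real.Gamma (l + n + 2))
        * Real.exp (-p.2.1 * ∑ j, Complex.normSq (p.1 j))
        * Real.exp (-p.2.1 / p.2.2) : ℝ) : ℂ) * ψ (p.1, p.2.1)
  else 0

/-- `∫₀^∞ e^{−2ξ/r} r^{−(λ+2)} dr = Γ(λ+1)/(2ξ)^{λ+1}`, and consequently `V_λ`
is an isometry from `L²(ℂⁿ × ℝ₊, η)` into `L²(ℂⁿ × ℝ × ℝ₊, ν_λ)`. -/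
theorem Vlam_isometry (n : ℕ) (l : ℝ) (hl : -1 < l) :
    (∀ ξ : ℝ, 0 < ξ →
      ∫ r in Set.Ioi (0 : ℝ), Real.exp (-2 * ξ / r) * r ^ (-(l + 2)) =
        Real.Gamma (l + 1) / (2 * ξ) ^ (l + 1)) ∧
    (∀ ψ : (Fin n → ℂ) × ℝ → ℂ, Measurable ψ →
      ∫⁻ p, (‖Vlam n l ψ p‖₊ : ENNReal) ^ 2 ∂(nulam n l) =
        ∫⁻ q, (‖ψ q‖₊ : ENNReal) ^ 2 ∂(etaMeas n)) := by
  have hG1 : 0 < Real.Gamma (l + 1) := Real.Gamma_pos_of_pos (by linarith)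
  have hn0 : (0:ℝ) ≤ (n:ℝ) := Nat.cast_nonneg n
  have hG2 : 0 < Real.Gamma (l + n + 2) := Real.Gamma_pos_of_pos (by linarith)
  refine ⟨fun ξ hξ => (aux_int l hl hξ).2, fun ψ hψ => ?_⟩
  -- measurability of Vlam
  have hcoord : Measurable fun p : (Fin n → ℂ) × ℝ × ℝ => p.2.1 := measurable_snd.fst
  have hsum : Measurable fun w : Fin n → ℂ => ∑ j, Complex.normSq (w j) :=
    Finset.measurable_sum _ fun j _ =>
      Complex.continuous_normSq.measurable.comp (measurable_pi_apply j)
  have hrp1 : Measurable fun x : ℝ => x ^ (l + (n:ℝ) + 1) := by measurability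
  have hrp2 : Measurable fun x : ℝ => x ^ (l + 2) := by measurability
  have hV : Measurable (Vlam n l ψ) := by
    unfold Vlam
    refine Measurable.ite (measurableSet_lt measurable_const hcoord) ?_ measurable_const
    refine Measurable.mul ?_ (hψ.comp (measurable_fst.prodMk hcoord))
    apply Complex.measurable_ofReal.comp
    refine Measurable.mul (Measurable.mul ?_ ?_) ?_
    · exact measurable_const.mul
        (((measurable_const.mul (hrp1.comp (measurable_const.mul hcoord))).div
          measurable_const).sqrt)
    · exact (hcoord.neg.mul (hsum.comp measurable_fst)).exp
    · exact (hcoord.neg.div measurable_snd.snd).exp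
  -- density measurability
  have hdens1 : Measurable fun p : (Fin n → ℂ) × ℝ × ℝ =>
      ENNReal.ofReal (clam n l / (4 * p.2.2 ^ (l + 2))) :=
    ENNReal.measurable_ofReal.comp
      (measurable_const.div (measurable_const.mul (hrp2.comp measurable_snd.snd)))
  have hdens2 : Measurable fun q : (Fin n → ℂ) × ℝ =>
      ENNReal.ofReal ((2 * q.2 / Real.pi) ^ n
        * Real.exp (-2 * q.2 * ∑ j, Complex.normSq (q.1 j))) :=
    ENNReal.measurable_ofReal.comp
      ((((measurable_const.mul measurable_snd).div measurable_const).pow_const n).mul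
        (((measurable_const.mul measurable_snd).mul (hsum.comp measurable_fst)).exp))
  rw [nulam, etaMeas,
    lintegral_withDensity_eq_lintegral_mul_non_measurable _ hdens1
      (Filter.Eventually.of_forall fun p => ENNReal.ofReal_lt_top),
    lintegral_withDensity_eq_lintegral_mul_non_measurable _ hdens2
      (Filter.Eventually.of_forall fun q => ENNReal.ofReal_lt_top)]
  -- rewrite restricted measures as products
  have hset3 : ((Set.univ : Set (Fin n → ℂ)) ×ˢ ((Set.univ : Set ℝ) ×ˢ Set.Ioi (0:ℝ)))
      = {p : (Fin n → ℂ) × ℝ × ℝ | 0 < p.2.2} := by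
    ext p; simp [Set.mem_prod]
  have hset2 : ((Set.univ : Set (Fin n → ℂ)) ×ˢ Set.Ioi (0:ℝ))
      = {q : (Fin n → ℂ) × ℝ | 0 < q.2} := by
    ext q; simp [Set.mem_prod]
  have hmeas3 : (volume : Measure ((Fin n → ℂ) × ℝ × ℝ)).restrict {p | 0 < p.2.2}
      = (volume : Measure (Fin n → ℂ)).prod
          ((volume : Measure ℝ).prod ((volume : Measure ℝ).restrict (Set.Ioi 0))) := by
    rw [← hset3, Measure.volume_eq_prod, Measure.volume_eq_prod, ← Measure.prod_restrict,
      ← Measure.prod_restrict, Measure.restrict_univ, Measure.restrict_univ]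
  have hmeas2 : (volume : Measure ((Fin n → ℂ) × ℝ)).restrict {q | 0 < q.2}
      = (volume : Measure (Fin n → ℂ)).prod ((volume : Measure ℝ).restrict (Set.Ioi 0)) := by
    rw [← hset2, Measure.volume_eq_prod, ← Measure.prod_restrict, Measure.restrict_univ]
  rw [hmeas3, hmeas2]
  -- integrand measurability
  have hF : Measurable fun p : (Fin n → ℂ) × ℝ × ℝ =>
      ENNReal.ofReal (clam n l / (4 * p.2.2 ^ (l + 2))) * (‖Vlam n l ψ p‖₊ : ENNReal) ^ 2 :=
    hdens1.mul (hV.nnnorm.coe_nnreal_ennreal.pow_const 2)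
  have hG : Measurable fun q : (Fin n → ℂ) × ℝ =>
      ENNReal.ofReal ((2 * q.2 / Real.pi) ^ n
        * Real.exp (-2 * q.2 * ∑ j, Complex.normSq (q.1 j))) * (‖ψ q‖₊ : ENNReal) ^ 2 :=
    hdens2.mul (hψ.nnnorm.coe_nnreal_ennreal.pow_const 2)
  simp only [Pi.mul_apply]
  rw [lintegral_prod _ hF.aemeasurable, lintegral_prod _ hG.aemeasurable]
  refine lintegral_congr fun w => ?_
  have hFw : AEMeasurable (fun z : ℝ × ℝ =>
      ENNReal.ofReal (clam n l / (4 * (w, z).2.2 ^ (l + 2))) *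
        (‖Vlam n l ψ (w, z)‖₊ : ENNReal) ^ 2)
      ((volume : Measure ℝ).prod ((volume : Measure ℝ).restrict (Set.Ioi 0))) :=
    (hF.comp measurable_prodMk_left).aemeasurable
  rw [lintegral_prod _ hFw]
  rw [← lintegral_indicator measurableSet_Ioi]
  refine lintegral_congr fun ξ => ?_
  simp only [Pi.mul_apply]
  by_cases hξ : 0 < ξ
  · rw [Set.indicator_of_mem (Set.mem_Ioi.mpr hξ)]
    -- main computation
    set Sig : ℝ := ∑ j, Complex.normSq (w j) with hSig
    have hSig0 : 0 ≤ Sig := Finset.sum_nonneg fun j _ => Complex.normSq_nonneg _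
    set K : ℝ := Real.pi * (2 * ξ) ^ (l + n + 1) / Real.Gamma (l + n + 2) with hK
    have hK0 : 0 ≤ K := by positivity
    have hclam : 0 < clam n l := by rw [clam]; positivity
    have step1 : ∀ r ∈ Set.Ioi (0:ℝ),
        ENNReal.ofReal (clam n l / (4 * r ^ (l + 2))) *
          (‖Vlam n l ψ (w, ξ, r)‖₊ : ENNReal) ^ 2 =
        (ENNReal.ofReal (clam n l * K * Real.exp (-ξ * Sig) ^ 2) *
          (‖ψ (w, ξ)‖₊ : ENNReal) ^ 2) *
          ENNReal.ofReal (Real.exp (-2 * ξ / r) * r ^ (-(l + 2))) := by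
      intro r hr
      have hr0 : (0:ℝ) < r := hr
      have hrp : (0:ℝ) < r ^ (l + 2) := Real.rpow_pos_of_pos hr0 _
      have hC0 : (0:ℝ) ≤ 2 * Real.sqrt K * Real.exp (-ξ * Sig) * Real.exp (-ξ / r) := by
        positivity
      rw [Vlam, if_pos (by exact hξ : (0:ℝ) < (w, ξ, r).2.1)]
      simp only
      rw [nnnorm_mul, Complex.nnnorm_real, ENNReal.coe_mul, mul_pow,
        (by exact Real.enorm_eq_ofReal hC0 : ((‖(2 * Real.sqrt K * Real.exp (-ξ * Sig) * Real.exp (-ξ / r))‖₊ : NNReal) : ENNReal) = ENNReal.ofReal (2 * Real.sqrt K * Real.exp (-ξ * Sig) * Real.exp (-ξ / r))), ← ENNReal.ofReal_pow hC0]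
      rw [show ENNReal.ofReal (clam n l / (4 * r ^ (l + 2))) *
            (ENNReal.ofReal ((2 * Real.sqrt K * Real.exp (-ξ * Sig) * Real.exp (-ξ / r)) ^ 2) *
              (‖ψ (w, ξ)‖₊ : ENNReal) ^ 2) =
          (ENNReal.ofReal (clam n l / (4 * r ^ (l + 2))) *
            ENNReal.ofReal ((2 * Real.sqrt K * Real.exp (-ξ * Sig) * Real.exp (-ξ / r)) ^ 2)) *
            (‖ψ (w, ξ)‖₊ : ENNReal) ^ 2 from by ring]
      rw [← ENNReal.ofReal_mul (by positivity)]
      rw [show (ENNReal.ofReal (clam n l * K * Real.exp (-ξ * Sig) ^ 2) *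
            (‖ψ (w, ξ)‖₊ : ENNReal) ^ 2) *
            ENNReal.ofReal (Real.exp (-2 * ξ / r) * r ^ (-(l + 2))) =
          (ENNReal.ofReal (clam n l * K * Real.exp (-ξ * Sig) ^ 2) *
            ENNReal.ofReal (Real.exp (-2 * ξ / r) * r ^ (-(l + 2)))) *
            (‖ψ (w, ξ)‖₊ : ENNReal) ^ 2 from by ring]
      rw [← ENNReal.ofReal_mul (by positivity)]
      congr 1
      congr 1
      have hexp2 : Real.exp (-ξ / r) ^ 2 = Real.exp (-2 * ξ / r) := by
        rw [sq, ← Real.exp_add]; congr 1; ring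
      have hrneg : r ^ (-(l + 2)) = (r ^ (l + 2))⁻¹ := by
        rw [← Real.rpow_neg hr0.le]
      rw [mul_pow, mul_pow, mul_pow, Real.sq_sqrt hK0, hexp2, hrneg]
      field_simp
      ring
    rw [setLIntegral_congr_fun measurableSet_Ioi
      (fun r (hr : r ∈ Set.Ioi (0:ℝ)) => step1 r hr)]
    have hCne : ENNReal.ofReal (clam n l * K * Real.exp (-ξ * Sig) ^ 2) *
        (‖ψ (w, ξ)‖₊ : ENNReal) ^ 2 ≠ ⊤ :=
      ENNReal.mul_ne_top ENNReal.ofReal_ne_top (ENNReal.pow_ne_top ENNReal.coe_ne_top)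
    rw [lintegral_const_mul' _ _ hCne, aux_lint l hl hξ, mul_right_comm,
      ← ENNReal.ofReal_mul (by positivity)]
    congr 2
    have hexp : Real.exp (-ξ * Sig) ^ 2 = Real.exp (-2 * ξ * Sig) := by
      rw [sq, ← Real.exp_add]; congr 1; ring
    have hpow : (2 * ξ) ^ (l + (n:ℝ) + 1) = (2 * ξ) ^ (l + 1) * (2 * ξ) ^ (n:ℕ) := by
      rw [← Real.rpow_natCast (2 * ξ) n, ← Real.rpow_add (by positivity)]
      congr 1; ring
    have h2ξ : (0:ℝ) < (2 * ξ) ^ (l + 1) := Real.rpow_pos_of_pos (by positivity) _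
    rw [hK, hexp, clam, hpow]
    have hπ : (0:ℝ) < Real.pi := Real.pi_pos
    field_simp
    rw [div_pow, pow_succ]
    field_simp
  · -- ξ ≤ 0 : Vlam vanishes
    rw [Set.indicator_of_notMem (by simpa using hξ)]
    have : ∀ r : ℝ, Vlam n l ψ (w, ξ, r) = 0 := fun r => by
      rw [Vlam, if_neg (by exact hξ)]
    simp [this]
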